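/- For every z ∈ ℝ², the set Π(z) ∩ ℤ² has exactly r(𝒫(z)) elements; in particular, the level set Π(z) contains a lattice point if and only if 𝒫(z) ∈ ℰ. Moreover, if 𝒫(z) > 0 and 𝒫(z) ∉ ℰ, then Π(z) ∩ Δ is a finite set with exactly 4·(2⌊√𝒫(z)⌋ + 1) elements (these are the vertices of the non-critical polygon Π(z)). -/

import Mathlib

open scoped Classical

noncomputable section

open Set

/-- The scaled round-off map `F_λ` on the plane: `F_λ(z) = λ·F(z/λ)`,
so `F_λ(z) = (λ⌊z₁⌋ − z₂, z₁)`. -/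
def Fl (lam : ℝ) (z : ℝ × ℝ) : ℝ × ℝ := (lam * (⌊z.1⌋ : ℝ) - z.2, z.1)

/-- The inverse of `F_λ`. -/
def Flinv (lam : ℝ) (z : ℝ × ℝ) : ℝ × ℝ := (z.2, lam * (⌊z.2⌋ : ℝ) - z.1)

/-- Integer iterate `F_λ^k`, `k ∈ ℤ`. -/
def FlIter (lam : ℝ) (k : ℤ) (z : ℝ × ℝ) : ℝ × ℝ :=
  if 0 ≤ k then (Fl lam)^[k.toNat] z else (Flinv lam)^[(-k).toNat] z

/-- Membership in the scaled lattice `(λℤ)²`. -/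
def IsLatticePt (lam : ℝ) (z : ℝ × ℝ) : Prop := ∃ a b : ℤ, z = (lam * a, lam * b)

/-- The discrete vector field `𝐯(z) = F_λ⁴(z) − z`. -/
def vfield (lam : ℝ) (z : ℝ × ℝ) : ℝ × ℝ := (Fl lam)^[4] z - z

/-- The auxiliary (integrable) vector field `𝐰`. -/
def wfield (lam : ℝ) (z : ℝ × ℝ) : ℝ × ℝ :=
  (lam * (2 * (⌊z.2⌋ : ℝ) + 1), -(lam * (2 * (⌊z.1⌋ : ℝ) + 1)))

/-- The constant value `𝐰_{m,n}` of `𝐰` on the box `B_{m,n}`. -/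
def wmn (lam : ℝ) (m n : ℤ) : ℝ × ℝ :=
  (lam * (2 * (n : ℝ) + 1), -(lam * (2 * (m : ℝ) + 1)))

/-- The piecewise-affine function `P(x) = ⌊x⌋² + (2⌊x⌋+1)(x − ⌊x⌋)`. -/
def Pfun (x : ℝ) : ℝ := (⌊x⌋ : ℝ) ^ 2 + (2 * (⌊x⌋ : ℝ) + 1) * (x - (⌊x⌋ : ℝ))

/-- The Hamiltonian `𝒫(x,y) = P(x) + P(y)`. -/
def Ham (z : ℝ × ℝ) : ℝ := Pfun z.1 + Pfun z.2

/-- The round Hamiltonian `𝒬(x,y) = x² + y²`. -/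
def Qfun (z : ℝ × ℝ) : ℝ := z.1 ^ 2 + z.2 ^ 2

/-- The level set `Π(z)` of `𝒫` through `z`. -/
def levelSet (z : ℝ × ℝ) : Set (ℝ × ℝ) := {w | Ham w = Ham z}

/-- The grid `Δ` of horizontal and vertical integer lines. -/
def DeltaSet : Set (ℝ × ℝ) := {z | (∃ m : ℤ, z.1 = (m : ℝ)) ∨ (∃ n : ℤ, z.2 = (n : ℝ))}

/-- The box `B_{m,n}`. -/
def Bbox (m n : ℤ) : Set (ℝ × ℝ) := {z | ⌊z.1⌋ = m ∧ ⌊z.2⌋ = n}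

/-- The lattice `ℤ² ⊂ ℝ²`. -/
def intLattice : Set (ℝ × ℝ) := {z | ∃ a b : ℤ, z = ((a : ℝ), (b : ℝ))}

/-- `r(c)`: the number of representations of `c` as a sum of two integer squares. -/
def rfun (c : ℝ) : ℕ := Set.ncard {p : ℤ × ℤ | ((p.1 : ℝ)) ^ 2 + ((p.2 : ℝ)) ^ 2 = c}

/-- Euclidean distance from `z` to the symmetry line `y = x`. -/
def dG (z : ℝ × ℝ) : ℝ := |z.1 - z.2| / Real.sqrt 2

/-- The integer round-off `R`. -/
def Rfl (z : ℝ × ℝ) : ℤ × ℤ := (⌊z.1⌋, ⌊z.2⌋)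

/-- The rescaled round-off `R_λ(w) = λ·R(w/λ)`. -/
def Rlam (lam : ℝ) (w : ℝ × ℝ) : ℝ × ℝ :=
  (lam * (⌊w.1 / lam⌋ : ℝ), lam * (⌊w.2 / lam⌋ : ℝ))

/-- The return domain `X`. -/
def Xdom (lam : ℝ) : Set (ℝ × ℝ) :=
  {z | IsLatticePt lam z ∧ 0 ≤ z.1 ∧ 0 ≤ z.2 ∧
    dG z ≤ dG ((Fl lam)^[4] z) ∧ dG z < dG ((Flinv lam)^[4] z)}

/-- Forward transit time `τ` to `X`. -/
def tau (lam : ℝ) (z : ℝ × ℝ) : ℕ := sInf {k : ℕ | 1 ≤ k ∧ (Fl lam)^[k] z ∈ Xdom lam}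

/-- Backward transit time `τ₋` to `X`. -/
def tauMinus (lam : ℝ) (z : ℝ × ℝ) : ℕ := sInf {k : ℕ | (Flinv lam)^[k] z ∈ Xdom lam}

/-- The return orbit `O_τ(z)`. -/
def returnOrbit (lam : ℝ) (z : ℝ × ℝ) : Set (ℝ × ℝ) :=
  {w | ∃ k : ℤ, -(tauMinus lam z : ℤ) ≤ k ∧ k ≤ (tau lam z : ℤ) ∧ w = FlIter lam k z}

/-- The first-return map `Φ`. -/
def Phi (lam : ℝ) (z : ℝ × ℝ) : ℝ × ℝ := (Fl lam)^[tau lam z] z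

/-- The full orbit `O(z) = {F_λ^t(z) : t ∈ ℤ}`. -/
def fullOrbit (lam : ℝ) (z : ℝ × ℝ) : Set (ℝ × ℝ) := {w | ∃ t : ℤ, w = FlIter lam t z}

/-- The set `Λ` of transition points. -/
def TransSet (lam : ℝ) : Set (ℝ × ℝ) :=
  {z | IsLatticePt lam z ∧ Rfl ((Fl lam)^[4] z) ≠ Rfl z}

/-- The set `Σ = ⋃ Σ_{m,n}`. -/
def SigmaSet (lam : ℝ) : Set (ℝ × ℝ) :=
  {z | z ∈ TransSet lam ∧ ∃ m n : ℤ,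
    max |z.1 - (m : ℝ)| |z.2 - (n : ℝ)| ≤
      lam * (max |2 * (m : ℝ) + 1| |2 * (n : ℝ) + 1| + 2)}

/-- `ℰ`: the natural numbers which are sums of two integer squares. -/
def Eset : Set ℕ := {n | ∃ a b : ℤ, (n : ℤ) = a ^ 2 + b ^ 2}

/-- The successor of `e` in `ℰ`. -/
def nextE (e : ℕ) : ℕ := sInf {f | f ∈ Eset ∧ e < f}

/-- The critical interval `I^e = (e, e′)`. -/
def Icrit (e : ℕ) : Set ℝ := Set.Ioo (e : ℝ) (nextE e : ℝ)

/-- The set `X^e`. -/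
def Xe (lam : ℝ) (e : ℕ) : Set (ℝ × ℝ) :=
  {z | z ∈ Xdom lam ∧ ∀ w ∈ returnOrbit lam z, Ham w ∈ Icrit e}

/-- A point of `X^e` is regular if it is not a transition point and its return
orbit avoids `Σ`. -/
def IsRegularPt (lam : ℝ) (e : ℕ) (z : ℝ × ℝ) : Prop :=
  z ∈ Xe lam e ∧ z ∉ TransSet lam ∧ returnOrbit lam z ∩ SigmaSet lam = ∅

/-- `J` is a maximal subinterval `Ĩ^e(λ)` of `I^e` on which all points of `X^e`
are regular. -/
def IsMaxRegInterval (lam : ℝ) (e : ℕ) (J : Set ℝ) : Prop :=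
  J ⊆ Icrit e ∧ J.OrdConnected ∧
    (∀ z ∈ Xe lam e, Ham z ∈ J → IsRegularPt lam e z) ∧
    ∀ J' : Set ℝ, J ⊆ J' → J' ⊆ Icrit e → J'.OrdConnected →
      (∀ z ∈ Xe lam e, Ham z ∈ J' → IsRegularPt lam e z) → J' = J

/-- The regular domain `X̃^e` determined by the interval `J = Ĩ^e(λ)`. -/
def Xtilde (lam : ℝ) (e : ℕ) (J : Set ℝ) : Set (ℝ × ℝ) :=
  {z | z ∈ Xe lam e ∧ Ham z ∈ J}

/-- The type of a vertex: the floor of the absolute value of its non-integer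
coordinate. -/
def vtype (z : ℝ × ℝ) : ℕ :=
  if ∃ m : ℤ, z.1 = (m : ℝ) then (⌊|z.2|⌋).toNat else (⌊|z.1|⌋).toNat

/-- `v` (1-indexed, entries `v 1, …, v k` with `k = ⌊√e⌋+1`) is the vertex list
of the polygon class of `e`, and `o j` records whether the `j`-th vertex lies on
a horizontal lattice line (i.e. has integer `y`-coordinate): for every value
`a ∈ I^e`, the vertices of the level polygon `{𝒫 = a}` lying in the first octant,
enumerated clockwise (i.e. by increasing `x`-coordinate), have types
`v 1, …, v k`. -/
def IsVertexList (e : ℕ) (v : ℕ → ℕ) (o : ℕ → Bool) : Prop :=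
  ∀ a ∈ Icrit e, ∃ p : ℕ → ℝ × ℝ,
    (∀ j, 1 ≤ j → j ≤ Nat.sqrt e + 1 →
      Ham (p j) = a ∧ p j ∈ DeltaSet ∧ 0 ≤ (p j).2 ∧ (p j).2 ≤ (p j).1 ∧
        vtype (p j) = v j ∧ (o j = true ↔ ∃ n : ℤ, (p j).2 = (n : ℝ))) ∧
    (∀ i j, 1 ≤ i → i < j → j ≤ Nat.sqrt e + 1 → (p i).1 < (p j).1) ∧
    (∀ w : ℝ × ℝ, Ham w = a → w ∈ DeltaSet → 0 ≤ w.2 → w.2 ≤ w.1 →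
      ∃ j, 1 ≤ j ∧ j ≤ Nat.sqrt e + 1 ∧ w = p j)

/-- The extended vertex list: `v_j = v_{2k−j}` for `k < j ≤ 2k−1`. -/
def vext (e : ℕ) (v : ℕ → ℕ) (j : ℕ) : ℕ :=
  if j ≤ Nat.sqrt e + 1 then v j else v (2 * (Nat.sqrt e + 1) - j)

/-- The extended orientation list. -/
def oext (e : ℕ) (o : ℕ → Bool) (j : ℕ) : Bool :=
  if j ≤ Nat.sqrt e + 1 then o j else o (2 * (Nat.sqrt e + 1) - j)

/-- The recursively defined integers `q_j` (here `v` is the extended vertex list):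
`q₁ = (2v₁+1)²`, `q_j = q_{j−1}` if `v_j = v_{j−1}`, and
`q_j = lcm((2v_j+1)(2v_{j−1}+1), q_{j−1})` otherwise. -/
def qseq (v : ℕ → ℕ) : ℕ → ℕ
  | 0 => (2 * v 1 + 1) ^ 2
  | 1 => (2 * v 1 + 1) ^ 2
  | j + 2 =>
    if v (j + 2) = v (j + 1) then qseq v (j + 1)
    else Nat.lcm ((2 * v (j + 2) + 1) * (2 * v (j + 1) + 1)) (qseq v (j + 1))

/-- `p_j = q_j/(2v_j+1)`. -/
def pseq (v : ℕ → ℕ) (j : ℕ) : ℕ := qseq v j / (2 * v j + 1)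

/-- `q = q_{2k−1}`. -/
def qval (e : ℕ) (v : ℕ → ℕ) : ℕ := qseq (vext e v) (2 * (Nat.sqrt e + 1) - 1)

/-- The vector `L_j = (λ q_j/(2v₁+1))·(1,1)`. -/
def Lvec (lam : ℝ) (v1 : ℕ) (qj : ℕ) : ℝ × ℝ :=
  (lam * (qj : ℝ) / (2 * (v1 : ℝ) + 1), lam * (qj : ℝ) / (2 * (v1 : ℝ) + 1))

/-- The lattice `𝕃 = ℤ·L_j + ℤ·((L_j − 𝐰_{v₁,v₁})/2)` as an additive subgroup
of `ℝ²`. -/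
def latticeL (lam : ℝ) (v1 : ℕ) (qj : ℕ) : AddSubgroup (ℝ × ℝ) :=
  AddSubgroup.closure
    {Lvec lam v1 qj, (2⁻¹ : ℝ) • (Lvec lam v1 qj - wmn lam (v1 : ℤ) (v1 : ℤ))}

/-- Forward transit time of `F_λ⁴` to `Λ`. -/
def tTrans (lam : ℝ) (z : ℝ × ℝ) : ℕ :=
  sInf {i : ℕ | 1 ≤ i ∧ (Fl lam)^[4 * i] z ∈ TransSet lam}

/-- The strip map `Ψ(z) = F_λ^{4t(z)}(z)`. -/
def Psi (lam : ℝ) (z : ℝ × ℝ) : ℝ × ℝ := (Fl lam)^[4 * tTrans lam z] z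

/-- Backward transit time of `F_λ⁻⁴` to `Λ`. -/
def sTrans (lam : ℝ) (z : ℝ × ℝ) : ℕ :=
  sInf {i : ℕ | 1 ≤ i ∧ (Flinv lam)^[4 * i] z ∈ TransSet lam}

/-- The inverse strip map `Ψ⁻¹`. -/
def PsiInv (lam : ℝ) (z : ℝ × ℝ) : ℝ × ℝ := (Flinv lam)^[4 * sTrans lam z] z

/-- `Ψ^j` for `j ∈ {−1} ∪ ℕ`. -/
def PsiPow (lam : ℝ) (j : ℤ) (z : ℝ × ℝ) : ℝ × ℝ :=
  if j < 0 then PsiInv lam z else (Psi lam)^[j.toNat] z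

/-- The coordinate unit vector in the non-integer direction of a vertex lying
on a horizontal (`horiz = true`) resp. vertical lattice line. -/
def evec (horiz : Bool) : ℝ × ℝ := if horiz then (1, 0) else (0, 1)

/-- `s ∈ {0, …, 2v_j}` is the code entry at a vertex point `w` of type `vj`: if
the vertex lies on a horizontal line `y = n` then, writing
`w = λ(⌈v_j/λ⌉ + x_j, ⌈n/λ⌉ + y_j)` with `|y_j| < 2v_j+1`, `s ≡ y_j (mod 2v_j+1)`;
analogously in the vertical case. -/
def CodeAt (lam : ℝ) (vj : ℕ) (horiz : Bool) (w : ℝ × ℝ) (s : ℤ) : Prop :=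
  0 ≤ s ∧ s < 2 * (vj : ℤ) + 1 ∧
    (if horiz then
        ∃ n Y yj : ℤ, w.2 = lam * (Y : ℝ) ∧ Y = ⌈(n : ℝ) / lam⌉ + yj ∧
          |yj| < 2 * (vj : ℤ) + 1 ∧ s ≡ yj [ZMOD (2 * (vj : ℤ) + 1)]
      else
        ∃ m X xj : ℤ, w.1 = lam * (X : ℝ) ∧ X = ⌈(m : ℝ) / lam⌉ + xj ∧
          |xj| < 2 * (vj : ℤ) + 1 ∧ s ≡ xj [ZMOD (2 * (vj : ℤ) + 1)])

/-- `σ` is the orbit code `(σ₋₁, σ₁, …, σ_{2k−1})` of `z`. -/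
def IsOrbitCode (lam : ℝ) (e : ℕ) (v : ℕ → ℕ) (o : ℕ → Bool) (z : ℝ × ℝ)
    (σ : ℤ → ℤ) : Prop :=
  CodeAt lam (v 1) (!(o 1)) (PsiInv lam z) (σ (-1)) ∧
    ∀ j : ℕ, 1 ≤ j → j ≤ 2 * (Nat.sqrt e + 1) - 1 →
      CodeAt lam (vext e v j) (oext e o j) ((Psi lam)^[j] z) (σ (j : ℤ))

/-- The Euclidean norm on `ℝ²`. -/
def enorm2 (z : ℝ × ℝ) : ℝ := Real.sqrt (z.1 ^ 2 + z.2 ^ 2)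

/-- The rotation number `ν(λ) = arccos(λ/2)/(2π)`. -/
def nuRot (lam : ℝ) : ℝ := Real.arccos (lam / 2) / (2 * Real.pi)

/-- Distance from a real number to the nearest integer. -/
def distInt (x : ℝ) : ℝ := |x - (round x : ℝ)|

/-- The first-order recurrence time `t*(λ)`. -/
def tstar (lam : ℝ) : ℕ :=
  sInf {k : ℕ | 1 ≤ k ∧ distInt ((k : ℝ) * nuRot lam) < distInt (4 * nuRot lam)}

/-- The square `A(r,λ)` of lattice points. -/
def Aset (r lam : ℝ) : Set (ℝ × ℝ) := {z | IsLatticePt lam z ∧ max |z.1| |z.2| < r}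

end
noncomputable section

lemma pfun_intCast (a : ℤ) : Pfun (a:ℝ) = (a:ℝ)^2 := by
  simp [Pfun]

lemma pfun_even (x : ℝ) : Pfun (-x) = Pfun x := by
  by_cases h : ∃ a : ℤ, x = (a:ℝ)
  · obtain ⟨a, rfl⟩ := h
    rw [← Int.cast_neg, pfun_intCast, pfun_intCast]; push_cast; ring
  · have hfr : ⌊-x⌋ = -⌊x⌋ - 1 := by
      rw [Int.floor_eq_iff]
      constructor
      · push_cast; nlinarith [Int.lt_floor_add_one x]
      · push_cast
        have := Int.floor_le x
        have hne : (⌊x⌋:ℝ) ≠ x := fun hh => h ⟨⌊x⌋, hh.symm⟩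
        have : (⌊x⌋:ℝ) < x := lt_of_le_of_ne this hne
        linarith
    unfold Pfun
    rw [hfr]; push_cast; ring

lemma pfun_nonneg (x : ℝ) (hx : 0 ≤ x) : 0 ≤ Pfun x := by
  have h0 : (0:ℝ) ≤ ⌊x⌋ := by exact_mod_cast Int.floor_nonneg.2 hx
  have h1 := Int.floor_le x
  unfold Pfun; nlinarith

lemma pfun_strictMonoOn : StrictMonoOn Pfun (Set.Ici 0) := by
  intro x hx y hy hxy
  simp only [Set.mem_Ici] at hx hy
  have hm : (0:ℝ) ≤ ⌊x⌋ := by exact_mod_cast Int.floor_nonneg.2 hx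
  have hn : (0:ℝ) ≤ ⌊y⌋ := by exact_mod_cast Int.floor_nonneg.2 hy
  have hmn : ⌊x⌋ ≤ ⌊y⌋ := Int.floor_le_floor hxy.le
  have hx1 := Int.lt_floor_add_one x
  have hx0 := Int.floor_le x
  have hy1 := Int.lt_floor_add_one y
  have hy0 := Int.floor_le y
  rcases eq_or_lt_of_le hmn with h | h
  · unfold Pfun; rw [← h]; nlinarith
  · have h' : (⌊x⌋:ℝ) + 1 ≤ ⌊y⌋ := by exact_mod_cast h
    unfold Pfun
    nlinarith [mul_nonneg (by linarith : (0:ℝ) ≤ 2*(⌊y⌋:ℝ)+1) (by linarith : (0:ℝ) ≤ y - ⌊y⌋)]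

lemma pfun_surj (c : ℝ) (hc : 0 ≤ c) : ∃ y, 0 ≤ y ∧ Pfun y = c := by
  set n : ℕ := ⌊Real.sqrt c⌋₊ with hn
  have hs : Real.sqrt c ^ 2 = c := Real.sq_sqrt hc
  have h1 : (n:ℝ) ≤ Real.sqrt c := Nat.floor_le (Real.sqrt_nonneg c)
  have h2 : Real.sqrt c < n + 1 := Nat.lt_floor_add_one _
  have hl : (n:ℝ)^2 ≤ c := by nlinarith [Real.sqrt_nonneg c]
  have hu : c < ((n:ℝ)+1)^2 := by nlinarith [Real.sqrt_nonneg c]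
  have hd : (0:ℝ) < 2*(n:ℝ)+1 := by positivity
  have ht0 : 0 ≤ (c - n^2)/(2*n+1) := div_nonneg (by linarith) hd.le
  refine ⟨(n:ℝ) + (c - n^2)/(2*n+1), add_nonneg (Nat.cast_nonneg n) ht0, ?_⟩
  have ht1 : (c - n^2)/(2*n+1) < 1 := by
    rw [div_lt_one hd]; nlinarith
  have hfl : ⌊(n:ℝ) + (c - n^2)/(2*n+1)⌋ = (n:ℤ) := by
    rw [Int.floor_eq_iff]
    push_cast; constructor <;> linarith
  unfold Pfun
  rw [hfl]; push_cast
  field_simp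
  ring

def Pinv (c : ℝ) : ℝ := if h : 0 ≤ c then (pfun_surj c h).choose else 0

lemma Pinv_nonneg (c : ℝ) (h : 0 ≤ c) : 0 ≤ Pinv c := by
  rw [Pinv, dif_pos h]; exact (pfun_surj c h).choose_spec.1

lemma Pfun_Pinv (c : ℝ) (h : 0 ≤ c) : Pfun (Pinv c) = c := by
  rw [Pinv, dif_pos h]; exact (pfun_surj c h).choose_spec.2

lemma pfun_inj {a b : ℝ} (ha : 0 ≤ a) (hb : 0 ≤ b) (h : Pfun a = Pfun b) : a = b :=
  pfun_strictMonoOn.injOn ha hb h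

lemma pfun_abs (x : ℝ) : Pfun x = Pfun |x| := by
  rcases abs_cases x with ⟨h, _⟩ | ⟨h, _⟩
  · rw [h]
  · rw [h, pfun_even]

end

/-- Lattice points on level sets of `𝒫`, and the number of vertices of a
non-critical polygon. -/
theorem levelSet_lattice_points_and_vertices :
    ∀ z : ℝ × ℝ,
      Set.ncard (levelSet z ∩ intLattice) = rfun (Ham z) ∧
      ((levelSet z ∩ intLattice).Nonempty ↔ ∃ e ∈ Eset, Ham z = (e : ℝ)) ∧
      (0 < Ham z → (∀ e ∈ Eset, Ham z ≠ (e : ℝ)) →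
        (levelSet z ∩ DeltaSet).Finite ∧
        (Set.ncard (levelSet z ∩ DeltaSet) : ℤ) =
          4 * (2 * ⌊Real.sqrt (Ham z)⌋ + 1)) := by
  intro z
  set c := Ham z with hc
  have hinj : Function.Injective (fun p : ℤ × ℤ => ((p.1 : ℝ), (p.2 : ℝ))) := by
    rintro ⟨a, b⟩ ⟨a', b'⟩ h
    simp only [Prod.mk.injEq] at h ⊢
    exact ⟨by exact_mod_cast h.1, by exact_mod_cast h.2⟩
  have key1 : levelSet z ∩ intLattice =
      (fun p : ℤ × ℤ => ((p.1 : ℝ), (p.2 : ℝ))) ''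
        {p : ℤ × ℤ | ((p.1 : ℝ)) ^ 2 + ((p.2 : ℝ)) ^ 2 = c} := by
    ext w
    simp only [Set.mem_inter_iff, levelSet, intLattice, Set.mem_setOf_eq, Set.mem_image]
    constructor
    · rintro ⟨hw, a, b, rfl⟩
      exact ⟨(a, b), by rw [hc]; simpa [Ham, pfun_intCast] using hw, rfl⟩
    · rintro ⟨⟨a, b⟩, hab, rfl⟩
      exact ⟨by rw [hc] at hab; simpa [Ham, pfun_intCast] using hab, a, b, rfl⟩
  refine ⟨?_, ?_, ?_⟩
  · rw [key1, Set.ncard_image_of_injective _ hinj]; rfl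
  · constructor
    · rintro ⟨w, hw⟩
      rw [key1] at hw
      obtain ⟨⟨a, b⟩, hab, -⟩ := hw
      simp only [Set.mem_setOf_eq] at hab
      have hnn : (0 : ℤ) ≤ a ^ 2 + b ^ 2 := by positivity
      refine ⟨(a ^ 2 + b ^ 2).toNat, ⟨a, b, by rw [Int.toNat_of_nonneg hnn]⟩, ?_⟩
      rw [← hab]
      exact_mod_cast (congrArg (Int.cast : ℤ → ℝ) (Int.toNat_of_nonneg hnn)).symm
    · rintro ⟨e, ⟨a, b, he⟩, hce⟩
      rw [key1]
      refine ⟨_, ⟨(a, b), ?_, rfl⟩⟩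
      simp only [Set.mem_setOf_eq]
      rw [hce]
      exact_mod_cast (congrArg (Int.cast : ℤ → ℝ) he).symm
  · intro hpos hne
    set K : ℤ := ⌊Real.sqrt c⌋ with hK
    have hsq : Real.sqrt c ^ 2 = c := Real.sq_sqrt hpos.le
    have hsnn := Real.sqrt_nonneg c
    have hK0 : 0 ≤ K := Int.floor_nonneg.2 hsnn
    have hKle : (K : ℝ) ≤ Real.sqrt c := Int.floor_le _
    have hKlt : Real.sqrt c < K + 1 := Int.lt_floor_add_one _
    have hnotsum : ∀ a b : ℤ, (a : ℝ) ^ 2 + (b : ℝ) ^ 2 ≠ c := by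
      intro a b hab
      have hnn : (0 : ℤ) ≤ a ^ 2 + b ^ 2 := by positivity
      refine hne (a ^ 2 + b ^ 2).toNat ⟨a, b, by rw [Int.toNat_of_nonneg hnn]⟩ ?_
      rw [← hab]
      exact_mod_cast (congrArg (Int.cast : ℤ → ℝ) (Int.toNat_of_nonneg hnn)).symm
    set ym : ℤ → ℝ := fun m => Pinv (c - (m : ℝ) ^ 2) with hym
    have hmlt : ∀ m : ℤ, m ∈ Finset.Icc (-K) K → (m : ℝ) ^ 2 < c := by
      intro m hm
      rw [Finset.mem_Icc] at hm
      have h1 : (m : ℝ) ≤ K := by exact_mod_cast hm.2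
      have h2 : (-K : ℝ) ≤ m := by exact_mod_cast hm.1
      have hle : (m : ℝ) ^ 2 ≤ c := by nlinarith
      exact lt_of_le_of_ne hle (fun h => hnotsum m 0 (by push_cast; linarith))
    have hymP : ∀ m : ℤ, m ∈ Finset.Icc (-K) K → Pfun (ym m) = c - (m : ℝ) ^ 2 := by
      intro m hm; exact Pfun_Pinv _ (by linarith [hmlt m hm])
    have hympos : ∀ m : ℤ, m ∈ Finset.Icc (-K) K → 0 < ym m := by
      intro m hm
      have h0 : 0 ≤ ym m := Pinv_nonneg _ (by linarith [hmlt m hm])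
      rcases lt_or_eq_of_le h0 with h | h
      · exact h
      · exfalso
        have h1 := hymP m hm
        rw [← h] at h1
        have h00 : Pfun (0 : ℝ) = 0 := by simpa using pfun_intCast 0
        rw [h00] at h1
        linarith [hmlt m hm]
    have hymni : ∀ m : ℤ, m ∈ Finset.Icc (-K) K → ∀ n : ℤ, ym m ≠ (n : ℝ) := by
      intro m hm n h
      have h1 := hymP m hm
      rw [h, pfun_intCast] at h1
      exact hnotsum m n (by linarith)
    set f : ℤ × Fin 4 → ℝ × ℝ := fun p =>
      if p.2 = 0 then ((p.1 : ℝ), ym p.1)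
      else if p.2 = 1 then ((p.1 : ℝ), -ym p.1)
      else if p.2 = 2 then (ym p.1, (p.1 : ℝ))
      else (-ym p.1, (p.1 : ℝ)) with hf
    have hfinj : Set.InjOn f ↑((Finset.Icc (-K) K) ×ˢ (Finset.univ : Finset (Fin 4))) := by
      rintro ⟨m, i⟩ hm ⟨m', i'⟩ hm' heq
      simp only [Finset.coe_product, Set.mem_prod, Finset.mem_coe] at hm hm'
      have p1 := hympos m hm.1
      have p2 := hympos m' hm'.1
      have n1 := hymni m hm.1
      have n2 := hymni m' hm'.1
      fin_cases i <;> fin_cases i' <;>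
        simp only [hf, Fin.isValue, Fin.zero_eta, Fin.mk_one, Fin.reduceFinMk, Fin.reduceEq,
          if_true, if_false, reduceIte, Prod.mk.injEq] at heq ⊢
      all_goals first
        | exact ⟨by exact_mod_cast heq.1, trivial⟩
        | exact ⟨by exact_mod_cast heq.2, trivial⟩
        | exact absurd heq.1 (n1 _)
        | exact absurd heq.2 (n1 _)
        | exact absurd heq.1.symm (n2 _)
        | exact absurd heq.2.symm (n2 _)
        | exact absurd (show ym m = ((-m' : ℤ) : ℝ) by push_cast; linarith [heq.1]) (n1 _)
        | exact absurd (show ym m' = ((-m : ℤ) : ℝ) by push_cast; linarith [heq.1]) (n2 _)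
        | exact (show False by linarith [heq.1, heq.2]).elim
    have hTset : levelSet z ∩ DeltaSet =
        f '' ↑((Finset.Icc (-K) K) ×ˢ (Finset.univ : Finset (Fin 4))) := by
      ext w
      obtain ⟨w1, w2⟩ := w
      simp only [Set.mem_inter_iff, levelSet, DeltaSet, Set.mem_setOf_eq, Set.mem_image,
        Finset.mem_coe, Finset.mem_product, Finset.mem_univ, and_true]
      constructor
      · rintro ⟨hwl, hwd⟩
        have hwl' : Pfun w1 + Pfun w2 = c := hwl
        rcases hwd with ⟨m, hm⟩ | ⟨n, hn⟩
        · replace hm : w1 = (m : ℝ) := hm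
          have hP2 : Pfun w2 = c - (m : ℝ) ^ 2 := by
            rw [hm, pfun_intCast] at hwl'; linarith
          have habs : Pfun |w2| = c - (m : ℝ) ^ 2 := by rw [← pfun_abs]; exact hP2
          have hnn : 0 ≤ c - (m : ℝ) ^ 2 := habs ▸ pfun_nonneg _ (abs_nonneg _)
          have hmK : m ∈ Finset.Icc (-K) K := by
            rw [Finset.mem_Icc, hK]
            constructor
            · rw [neg_le, Int.le_floor]
              push_cast; nlinarith
            · rw [Int.le_floor]; push_cast; nlinarith
          have hy : |w2| = ym m :=
            pfun_inj (abs_nonneg _) (Pinv_nonneg _ hnn) (by rw [habs, hymP m hmK])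
          rcases abs_cases w2 with ⟨h2, _⟩ | ⟨h2, _⟩
          · refine ⟨(m, 0), hmK, ?_⟩
            have hfv : f (m, 0) = ((m : ℝ), ym m) := by simp [hf]
            rw [hfv, Prod.mk.injEq]
            exact ⟨hm.symm, by rw [← hy]; linarith⟩
          · refine ⟨(m, 1), hmK, ?_⟩
            have hfv : f (m, 1) = ((m : ℝ), -ym m) := by simp [hf]
            rw [hfv, Prod.mk.injEq]
            exact ⟨hm.symm, by rw [← hy]; linarith⟩
        · replace hn : w2 = (n : ℝ) := hn
          have hP1 : Pfun w1 = c - (n : ℝ) ^ 2 := by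
            rw [hn, pfun_intCast] at hwl'; linarith
          have habs : Pfun |w1| = c - (n : ℝ) ^ 2 := by rw [← pfun_abs]; exact hP1
          have hnn : 0 ≤ c - (n : ℝ) ^ 2 := habs ▸ pfun_nonneg _ (abs_nonneg _)
          have hmK : n ∈ Finset.Icc (-K) K := by
            rw [Finset.mem_Icc, hK]
            constructor
            · rw [neg_le, Int.le_floor]
              push_cast; nlinarith
            · rw [Int.le_floor]; push_cast; nlinarith
          have hy : |w1| = ym n :=
            pfun_inj (abs_nonneg _) (Pinv_nonneg _ hnn) (by rw [habs, hymP n hmK])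
          rcases abs_cases w1 with ⟨h2, _⟩ | ⟨h2, _⟩
          · refine ⟨(n, 2), hmK, ?_⟩
            have hfv : f (n, 2) = (ym n, (n : ℝ)) := by simp [hf]
            rw [hfv, Prod.mk.injEq]
            exact ⟨by rw [← hy]; linarith, hn.symm⟩
          · refine ⟨(n, 3), hmK, ?_⟩
            have hfv : f (n, 3) = (-ym n, (n : ℝ)) := by simp [hf]
            rw [hfv, Prod.mk.injEq]
            exact ⟨by rw [← hy]; linarith, hn.symm⟩
      · rintro ⟨⟨m, i⟩, hm, heq⟩
        have hm1 : m ∈ Finset.Icc (-K) K := hm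
        fin_cases i <;>
          simp only [hf, Fin.isValue, Fin.zero_eta, Fin.mk_one, Fin.reduceFinMk, Fin.reduceEq,
            if_true, if_false, reduceIte] at heq <;>
          (rw [Prod.mk.injEq] at heq; obtain ⟨h1, h2⟩ := heq; subst h1; subst h2)
        · refine ⟨?_, Or.inl ⟨m, rfl⟩⟩
          show Pfun ((m : ℤ) : ℝ) + Pfun (ym m) = Ham z
          rw [← hc, pfun_intCast, hymP m hm1]; ring
        · refine ⟨?_, Or.inl ⟨m, rfl⟩⟩
          show Pfun ((m : ℤ) : ℝ) + Pfun (-ym m) = Ham z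
          rw [← hc, pfun_intCast, pfun_even, hymP m hm1]; ring
        · refine ⟨?_, Or.inr ⟨m, rfl⟩⟩
          show Pfun (ym m) + Pfun ((m : ℤ) : ℝ) = Ham z
          rw [← hc, pfun_intCast, hymP m hm1]; ring
        · refine ⟨?_, Or.inr ⟨m, rfl⟩⟩
          show Pfun (-ym m) + Pfun ((m : ℤ) : ℝ) = Ham z
          rw [← hc, pfun_intCast, pfun_even, hymP m hm1]; ring
    have hfin : (levelSet z ∩ DeltaSet).Finite := by
      rw [hTset]; exact ((Finset.Icc (-K) K) ×ˢ Finset.univ).finite_toSet.image f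
    refine ⟨hfin, ?_⟩
    rw [hTset, Set.ncard_image_of_injOn hfinj, Set.ncard_coe_finset,
      Finset.card_product, Int.card_Icc]
    simp only [Finset.card_univ, Fintype.card_fin]
    push_cast
    omega
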